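/- Let o have characteristic 0, residue field of characteristic 2, and ramification index e, with r ≥ 4e, ℓ' = ⌊r/2⌋. For à ∈ M_2(o_r) a lift of the companion matrix with trace β̃, the set h_Ã^{ℓ'} = { x ∈ o_r : 2x ≡ 0 mod π^{ℓ'}, x(x+β̃) ≡ 0 mod π^{ℓ'} } equals the ideal (π^{ℓ'−m₀}) where m₀ = min{e, val(β̃)}; in particular |h_Ã^{ℓ'}| = q^{r−ℓ'+m₀}. -/

import Mathlib

set_option linter.unusedSectionVars false

section Aux

variable {O : Type*} [CommRing O] [IsDomain O]

/-- divisibility by a power of π in the quotient ring lifts. -/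
lemma dvd_mk_iff (π : O) {a r : ℕ} (har : a ≤ r) (c : O) :
    (Ideal.Quotient.mk (Ideal.span {π ^ r}) π) ^ a ∣ Ideal.Quotient.mk (Ideal.span {π ^ r}) c ↔
      π ^ a ∣ c := by
  constructor
  · rintro ⟨y, hy⟩
    obtain ⟨d, rfl⟩ := Ideal.Quotient.mk_surjective y
    rw [← map_pow, ← map_mul] at hy
    have h := Ideal.Quotient.eq.mp hy
    rw [Ideal.mem_span_singleton] at h
    obtain ⟨t, ht⟩ := h
    refine ⟨d + π ^ (r - a) * t, ?_⟩
    have hra : π ^ a * π ^ (r - a) = π ^ r := by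
      rw [← pow_add]; congr 1; omega
    linear_combination ht - t * hra
  · rintro ⟨d, rfl⟩
    exact ⟨Ideal.Quotient.mk _ d, by rw [← map_pow, ← map_mul]⟩

/-- The set of multiples of π^s in O/π^r is equivalent to O/π^(r-s). -/
lemma equiv_dvd_set (π : O) (hπ : π ≠ 0) {s r : ℕ} (hsr : s ≤ r) :
    Nonempty ((O ⧸ Ideal.span {π ^ (r - s)}) ≃
      {x : O ⧸ Ideal.span {π ^ r} // (Ideal.Quotient.mk (Ideal.span {π ^ r}) π) ^ s ∣ x}) := by
  set I : Ideal O := Ideal.span {π ^ (r - s)}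
  set J : Ideal O := Ideal.span {π ^ r}
  set g : O →ₗ[O] O ⧸ J := (J : Submodule O O).mkQ.comp (LinearMap.mulLeft O (π ^ s)) with hg
  have hker0 : (I : Submodule O O) ≤ LinearMap.ker g := by
    intro c hc
    rw [Ideal.mem_span_singleton] at hc
    obtain ⟨t, rfl⟩ := hc
    have : π ^ s * (π ^ (r - s) * t) ∈ J := by
      rw [← mul_assoc, ← pow_add, Ideal.mem_span_singleton]
      exact Dvd.dvd.mul_right (pow_dvd_pow π (by omega)) t
    simp only [g, LinearMap.mem_ker, LinearMap.comp_apply, LinearMap.mulLeft_apply,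
      Submodule.mkQ_apply]
    exact (Submodule.Quotient.mk_eq_zero _).mpr this
  have hker : LinearMap.ker g ≤ (I : Submodule O O) := by
    intro c hc
    have hc' : π ^ s * c ∈ J := by
      have := hc
      simp only [g, LinearMap.mem_ker, LinearMap.comp_apply, LinearMap.mulLeft_apply,
        Submodule.mkQ_apply] at this
      exact (Submodule.Quotient.mk_eq_zero _).mp this
    rw [Ideal.mem_span_singleton] at hc'
    have : π ^ s * π ^ (r - s) ∣ π ^ s * c := by
      rw [← pow_add]
      have : s + (r - s) = r := by omega
      rw [this]; exact hc'
    have hdvd : π ^ (r - s) ∣ c := (mul_dvd_mul_iff_left (pow_ne_zero s hπ)).mp this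
    exact Ideal.mem_span_singleton.mpr hdvd
  set f : (O ⧸ I) →ₗ[O] O ⧸ J := Submodule.liftQ (I : Submodule O O) g hker0
  have hfmk : ∀ c : O, f (Ideal.Quotient.mk I c) = Ideal.Quotient.mk J (π ^ s * c) := by
    intro c; rfl
  have hinj : Function.Injective f := by
    rw [← LinearMap.ker_eq_bot]
    exact Submodule.ker_liftQ_eq_bot _ _ _ hker
  have hrange : Set.range f =
      {x : O ⧸ J | (Ideal.Quotient.mk J π) ^ s ∣ x} := by
    ext x
    constructor
    · rintro ⟨y, rfl⟩
      obtain ⟨d, rfl⟩ := Ideal.Quotient.mk_surjective y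
      rw [hfmk]
      exact ⟨Ideal.Quotient.mk J d, by rw [← map_pow, ← map_mul]⟩
    · rintro ⟨y, hy⟩
      obtain ⟨d, rfl⟩ := Ideal.Quotient.mk_surjective y
      refine ⟨Ideal.Quotient.mk I d, ?_⟩
      rw [hfmk, hy, ← map_pow, ← map_mul]
  exact ⟨(Equiv.ofInjective f hinj).trans (Equiv.setCongr hrange)⟩

/-- Cardinality of O/π^m. -/
lemma card_quot_pow (π : O) (hπ : π ≠ 0)
    [Finite (O ⧸ Ideal.span {π})] (m : ℕ) :
    Finite (O ⧸ Ideal.span {π ^ m}) ∧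
      Nat.card (O ⧸ Ideal.span {π ^ m}) = (Nat.card (O ⧸ Ideal.span {π})) ^ m := by
  induction m with
  | zero =>
      have hsub : Subsingleton (O ⧸ Ideal.span {π ^ 0}) := by
        constructor
        intro a b
        obtain ⟨c, rfl⟩ := Ideal.Quotient.mk_surjective a
        obtain ⟨d, rfl⟩ := Ideal.Quotient.mk_surjective b
        apply Ideal.Quotient.eq.mpr
        rw [Ideal.mem_span_singleton, pow_zero]
        exact one_dvd _
      refine ⟨@Finite.of_subsingleton _ hsub, ?_⟩
      have h0 : (Nat.card (O ⧸ Ideal.span {π})) ^ 0 = 1 := pow_zero _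
      rw [h0]
      exact Nat.card_eq_one_iff_unique.mpr ⟨hsub, ⟨0⟩⟩
  | succ m ih =>
      obtain ⟨ihfin, ihcard⟩ := ih
      have hle : Ideal.span {π ^ (m + 1)} ≤ Ideal.span {π ^ m} :=
        Ideal.span_singleton_le_span_singleton.mpr (pow_dvd_pow π (Nat.le_succ m))
      set ψ : (O ⧸ Ideal.span {π ^ (m + 1)}) →+* O ⧸ Ideal.span {π ^ m} :=
        Ideal.Quotient.factor hle
      have hsurj : Function.Surjective ψ.toAddMonoidHom := by
        intro x
        obtain ⟨c, rfl⟩ := Ideal.Quotient.mk_surjective x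
        exact ⟨Ideal.Quotient.mk _ c, Ideal.Quotient.factor_mk hle c⟩
      set K : AddSubgroup (O ⧸ Ideal.span {π ^ (m + 1)}) := ψ.toAddMonoidHom.ker
      -- K as a set equals the multiples of π^m
      have hKset : (K : Set (O ⧸ Ideal.span {π ^ (m + 1)})) =
          {x : O ⧸ Ideal.span {π ^ (m + 1)} |
            (Ideal.Quotient.mk (Ideal.span {π ^ (m + 1)}) π) ^ m ∣ x} := by
        ext x
        obtain ⟨c, rfl⟩ := Ideal.Quotient.mk_surjective x
        have hψ : ψ.toAddMonoidHom (Ideal.Quotient.mk (Ideal.span {π ^ (m + 1)}) c) =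
            Ideal.Quotient.mk (Ideal.span {π ^ m}) c := Ideal.Quotient.factor_mk hle c
        rw [Set.mem_setOf_eq, SetLike.mem_coe, AddMonoidHom.mem_ker, hψ,
          Ideal.Quotient.eq_zero_iff_mem, Ideal.mem_span_singleton,
          dvd_mk_iff π (Nat.le_succ m) c]
      obtain ⟨eK⟩ := equiv_dvd_set π hπ (Nat.le_succ m) (s := m) (r := m + 1)
      have hm1 : m + 1 - m = 1 := by omega
      rw [hm1] at eK
      have e1 : (O ⧸ Ideal.span {π ^ 1}) ≃+* (O ⧸ Ideal.span {π}) :=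
        Ideal.quotEquivOfEq (by rw [pow_one])
      -- equivalence from K to O ⧸ span {π}
      have eKfull : Nonempty (K ≃ (O ⧸ Ideal.span {π})) := by
        refine ⟨(Equiv.setCongr hKset).trans ((eK.symm).trans e1.toEquiv)⟩
      obtain ⟨eKe⟩ := eKfull
      have hKfin : Finite K := Finite.of_equiv _ eKe.symm
      have hKcard : Nat.card K = Nat.card (O ⧸ Ideal.span {π}) := Nat.card_congr eKe
      -- quotient by K
      have eQ : ((O ⧸ Ideal.span {π ^ (m + 1)}) ⧸ K) ≃+ (O ⧸ Ideal.span {π ^ m}) :=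
        QuotientAddGroup.quotientKerEquivOfSurjective ψ.toAddMonoidHom hsurj
      have hQfin : Finite ((O ⧸ Ideal.span {π ^ (m + 1)}) ⧸ K) :=
        Finite.of_equiv _ eQ.toEquiv.symm
      have hfin : Finite (O ⧸ Ideal.span {π ^ (m + 1)}) :=
        Finite.of_addSubgroup_quotient K
      refine ⟨hfin, ?_⟩
      have := AddSubgroup.card_eq_card_quotient_mul_card_addSubgroup K
      rw [this, hKcard, Nat.card_congr eQ.toEquiv, ihcard, pow_succ]

end Aux

section Main
variable {O : Type*} [CommRing O] [IsDomain O]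

lemma main_iff (π : O) (hπ : Prime π)
    (e : ℕ) (w : Oˣ) (hw : (2 : O) = π ^ e * (w : O))
    (ℓ' r : ℕ) (h2e : 2 * e ≤ ℓ') (hlr : ℓ' ≤ r) (he : 1 ≤ e)
    (b : O) (v : ℕ) (hvr : v ≤ r) (hv1 : π ^ v ∣ b) (hv2 : v < r → ¬ π ^ (v + 1) ∣ b)
    (c : O) :
    (π ^ ℓ' ∣ 2 * c ∧ π ^ ℓ' ∣ c * (c + b)) ↔ π ^ (ℓ' - min e v) ∣ c := by
  have hme : min e v ≤ e := min_le_left _ _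
  have hmv : min e v ≤ v := min_le_right _ _
  constructor
  · rintro ⟨h1, h2⟩
    -- first: π^(ℓ'-e) ∣ c
    have hc : π ^ (ℓ' - e) ∣ c := by
      rw [hw] at h1
      have h1' : π ^ e * π ^ (ℓ' - e) ∣ π ^ e * ((w : O) * c) := by
        rw [← pow_add, show e + (ℓ' - e) = ℓ' by omega, ← mul_assoc]
        exact h1
      have h3 : π ^ (ℓ' - e) ∣ (w : O) * c :=
        (mul_dvd_mul_iff_left (pow_ne_zero e hπ.ne_zero)).mp h1'
      obtain ⟨t, ht⟩ := h3
      refine ⟨(↑w⁻¹ : O) * t, ?_⟩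
      have hwinv : (↑w⁻¹ : O) * (w : O) = 1 := w.inv_mul
      linear_combination (↑w⁻¹ : O) * ht - c * hwinv
    by_cases hev : e ≤ v
    · rw [min_eq_left hev]; exact hc
    · push_neg at hev
      rw [min_eq_right hev.le]
      obtain ⟨u, hu⟩ := hv1
      have hπu : ¬ π ∣ u := by
        rintro ⟨t, ht⟩
        exact hv2 (by omega) ⟨t, by rw [hu, ht, pow_succ]; ring⟩
      obtain ⟨d, hd⟩ := hc
      set s : O := π ^ (ℓ' - e - v) * d + u with hs
      have hsnd : ¬ π ∣ s := by
        intro hdvd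
        apply hπu
        have h5 : π ∣ π ^ (ℓ' - e - v) * d :=
          dvd_mul_of_dvd_left (dvd_pow_self π (by omega : ℓ' - e - v ≠ 0)) d
        exact (dvd_add_right h5).mp hdvd
      have hsplit : π ^ (ℓ' - e) = π ^ v * π ^ (ℓ' - e - v) := by
        rw [← pow_add]; congr 1; omega
      have hfact : c * (c + b) = π ^ v * (c * s) := by
        rw [hs, hu, hd]
        linear_combination (π ^ (ℓ' - e) * d * d) * hsplit
      have h6 : π ^ v * π ^ (ℓ' - v) ∣ π ^ v * (c * s) := by
        rw [← pow_add, show v + (ℓ' - v) = ℓ' by omega, ← hfact]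
        exact h2
      have h7 : π ^ (ℓ' - v) ∣ c * s :=
        (mul_dvd_mul_iff_left (pow_ne_zero v hπ.ne_zero)).mp h6
      exact hπ.pow_dvd_of_dvd_mul_right _ hsnd h7
  · rintro ⟨d, rfl⟩
    obtain ⟨u, rfl⟩ := hv1
    constructor
    · rw [hw, show π ^ e * (w : O) * (π ^ (ℓ' - min e v) * d) =
        (π ^ e * π ^ (ℓ' - min e v)) * ((w : O) * d) from by ring, ← pow_add]
      exact (pow_dvd_pow π (by omega)).mul_right _
    · rw [show (π ^ (ℓ' - min e v) * d) * ((π ^ (ℓ' - min e v) * d) + π ^ v * u) =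
        (π ^ ((ℓ' - min e v) + (ℓ' - min e v))) * (d * d)
          + (π ^ ((ℓ' - min e v) + v)) * (d * u) from by rw [pow_add, pow_add]; ring]
      exact dvd_add ((pow_dvd_pow π (by omega)).mul_right _)
        ((pow_dvd_pow π (by omega)).mul_right _)

end Main

/-- for `O` of characteristic 0 with residue characteristic 2 and
ramification index `e` (`2 = π^e·w`), `r ≥ 4e`, `ℓ' = ⌊r/2⌋`, the set
`h_Ã^{ℓ'} = { x ∈ o_r : 2x ≡ 0, x(x+β̃) ≡ 0 mod π^{ℓ'} }` equals the ideal
`(π^{ℓ'−m₀})` with `m₀ = min{e, val(β̃)}`, of cardinality `q^{r−ℓ'+m₀}`. -/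
theorem stmt_17 {O : Type*} [CommRing O] [IsDomain O] [IsDiscreteValuationRing O] [CharZero O]
    (π : O) (hπ : Irreducible π)
    [IsAdicComplete (Ideal.span {π}) O] [Finite (O ⧸ Ideal.span {π})]
    (e : ℕ) (he : 1 ≤ e) (w : Oˣ) (hw : (2 : O) = π ^ e * (w : O))
    (r : ℕ) (hre : 4 * e ≤ r) (ℓ' : ℕ) (hℓ' : ℓ' = r / 2)
    (b : O) (βt : O ⧸ Ideal.span {π ^ r})
    (hb : βt = Ideal.Quotient.mk (Ideal.span {π ^ r}) b)
    (v : ℕ) (hvr : v ≤ r) (hv1 : π ^ v ∣ b) (hv2 : v < r → ¬ π ^ (v + 1) ∣ b) :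
    ({x : O ⧸ Ideal.span {π ^ r} |
        2 * x ∈ Ideal.span {(Ideal.Quotient.mk (Ideal.span {π ^ r}) π) ^ ℓ'} ∧
        x * (x + βt) ∈ Ideal.span {(Ideal.Quotient.mk (Ideal.span {π ^ r}) π) ^ ℓ'}} =
      ((Ideal.span {(Ideal.Quotient.mk (Ideal.span {π ^ r}) π) ^ (ℓ' - min e v)} :
          Ideal (O ⧸ Ideal.span {π ^ r})) : Set (O ⧸ Ideal.span {π ^ r}))) ∧
    Nat.card {x : O ⧸ Ideal.span {π ^ r} |
        2 * x ∈ Ideal.span {(Ideal.Quotient.mk (Ideal.span {π ^ r}) π) ^ ℓ'} ∧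
        x * (x + βt) ∈ Ideal.span {(Ideal.Quotient.mk (Ideal.span {π ^ r}) π) ^ ℓ'}} =
      (Nat.card (O ⧸ Ideal.span {π})) ^ (r - ℓ' + min e v) := by
  have hprime : Prime π := hπ.prime
  have hπ0 : π ≠ 0 := hprime.ne_zero
  have hme : min e v ≤ e := min_le_left _ _
  have hmv : min e v ≤ v := min_le_right _ _
  have h2e : 2 * e ≤ ℓ' := by omega
  have hlr : ℓ' ≤ r := by omega
  have hsr : ℓ' - min e v ≤ r := by omega
  have hset : {x : O ⧸ Ideal.span {π ^ r} |
        2 * x ∈ Ideal.span {(Ideal.Quotient.mk (Ideal.span {π ^ r}) π) ^ ℓ'} ∧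
        x * (x + βt) ∈ Ideal.span {(Ideal.Quotient.mk (Ideal.span {π ^ r}) π) ^ ℓ'}} =
      ((Ideal.span {(Ideal.Quotient.mk (Ideal.span {π ^ r}) π) ^ (ℓ' - min e v)} :
          Ideal (O ⧸ Ideal.span {π ^ r})) : Set (O ⧸ Ideal.span {π ^ r})) := by
    ext x
    obtain ⟨c, rfl⟩ := Ideal.Quotient.mk_surjective x
    simp only [Set.mem_setOf_eq, SetLike.mem_coe, Ideal.mem_span_singleton, hb]
    have e2 : (2 : O ⧸ Ideal.span {π ^ r}) * Ideal.Quotient.mk (Ideal.span {π ^ r}) c =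
        Ideal.Quotient.mk (Ideal.span {π ^ r}) (2 * c) := by rw [map_mul, map_ofNat]
    have e3 : Ideal.Quotient.mk (Ideal.span {π ^ r}) c *
        (Ideal.Quotient.mk (Ideal.span {π ^ r}) c + Ideal.Quotient.mk (Ideal.span {π ^ r}) b) =
        Ideal.Quotient.mk (Ideal.span {π ^ r}) (c * (c + b)) := by rw [map_mul, map_add]
    rw [e2, e3, dvd_mk_iff π hlr (2 * c), dvd_mk_iff π hlr (c * (c + b)), dvd_mk_iff π hsr c]
    exact main_iff π hprime e w hw ℓ' r h2e hlr he b v hvr hv1 hv2 c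
  refine ⟨hset, ?_⟩
  have hIset : ((Ideal.span {(Ideal.Quotient.mk (Ideal.span {π ^ r}) π) ^ (ℓ' - min e v)} :
      Ideal (O ⧸ Ideal.span {π ^ r})) : Set (O ⧸ Ideal.span {π ^ r})) =
      {x : O ⧸ Ideal.span {π ^ r} |
        (Ideal.Quotient.mk (Ideal.span {π ^ r}) π) ^ (ℓ' - min e v) ∣ x} := by
    ext x
    simp [Ideal.mem_span_singleton]
  obtain ⟨eqv⟩ := equiv_dvd_set π hπ0 hsr (s := ℓ' - min e v) (r := r)
  have hcard := (card_quot_pow π hπ0 (r - (ℓ' - min e v))).2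
  have h1 : Nat.card {x : O ⧸ Ideal.span {π ^ r} |
        2 * x ∈ Ideal.span {(Ideal.Quotient.mk (Ideal.span {π ^ r}) π) ^ ℓ'} ∧
        x * (x + βt) ∈ Ideal.span {(Ideal.Quotient.mk (Ideal.span {π ^ r}) π) ^ ℓ'}} =
      Nat.card (O ⧸ Ideal.span {π ^ (r - (ℓ' - min e v))}) :=
    Nat.card_congr ((Equiv.setCongr (hset.trans hIset)).trans eqv.symm)
  rw [h1, hcard, show r - (ℓ' - min e v) = r - ℓ' + min e v by omega]
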